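/- arXiv:1805.01789 — 2 statements merged into one kernel-verified Lean document; each statement's English description precedes it below -/
import Mathlib

section
/- Let n ∈ ℕ, α ∈ (n, n+1], and let f : ℤ → ℝ vanish on all nonpositive integers. Then for every integer k ≥ 1, the conformable fractional difference of order α of the conformable fractional accumulation of order α of f at k recovers f(k); that is, k^{⌈α⌉−α}·(Δ^{n+1}(S^{n+1} g))(k) = f(k), where g(j) = f(j)·j^{α−⌈α⌉} for j ≥ 1 and g = 0 on nonpositive integers. -/
/-- The cumulative-sum operator: `(S h)(k) = ∑_{j=1}^{k} h j` for `k ≥ 1` and `0` for `k ≤ 0`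
(the sum over `Finset.Icc 1 k` is empty when `k ≤ 0`). -/
noncomputable def cumSum (h : ℤ → ℝ) : ℤ → ℝ := fun k => ∑ j ∈ Finset.Icc (1 : ℤ) k, h j

/-- The backward difference operator `(Δ h)(k) = h k - h (k-1)`. -/
def backDiff (h : ℤ → ℝ) : ℤ → ℝ := fun k => h k - h (k - 1)

lemma cumSum_vanish {h : ℤ → ℝ} (hh : ∀ k : ℤ, k ≤ 0 → h k = 0) :
    ∀ k : ℤ, k ≤ 0 → cumSum h k = 0 := by
  intro k hk
  simp [cumSum, Finset.Icc_eq_empty_of_lt (by omega : k < 1)]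

lemma backDiff_cumSum {h : ℤ → ℝ} (hh : ∀ k : ℤ, k ≤ 0 → h k = 0) :
    backDiff (cumSum h) = h := by
  funext k
  rcases le_or_gt k 0 with hk | hk
  · simp [backDiff, cumSum_vanish hh k hk, cumSum_vanish hh (k-1) (by omega), hh k hk]
  · have hins : Finset.Icc (1 : ℤ) k = insert k (Finset.Icc 1 (k-1)) := by
      ext x; simp [Finset.mem_Icc]; omega
    have hnot : k ∉ Finset.Icc (1:ℤ) (k-1) := by
      intro hmem; rw [Finset.mem_Icc] at hmem; omega
    simp only [backDiff, cumSum, hins, Finset.sum_insert hnot]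
    ring

lemma iter_inverse (m : ℕ) : ∀ h : ℤ → ℝ, (∀ k : ℤ, k ≤ 0 → h k = 0) →
    backDiff^[m] (cumSum^[m] h) = h := by
  induction m with
  | zero => intro h _; rfl
  | succ m ih =>
    intro h hh
    rw [Function.iterate_succ_apply' cumSum, Function.iterate_succ_apply backDiff]
    have hvan : ∀ k : ℤ, k ≤ 0 → cumSum^[m] h k = 0 := by
      clear ih
      induction m with
      | zero => exact hh
      | succ m ih2 =>
        rw [Function.iterate_succ_apply' cumSum]
        exact cumSum_vanish ih2
    rw [backDiff_cumSum hvan, ih h hh]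

/-- The conformable fractional difference of order `α ∈ (n, n+1]` inverts the conformable
fractional accumulation of the same order: for `f : ℤ → ℝ` vanishing on nonpositive integers and
`g j = f j * j^(α - ⌈α⌉)` for `j ≥ 1` (with `g = 0` on nonpositive integers and `⌈α⌉ = n+1`),
one has `k^(⌈α⌉-α) * (Δ^(n+1) (S^(n+1) g))(k) = f k` for every `k ≥ 1`. -/
theorem higher_cfd_cfa_inverse
    (n : ℕ) (α : ℝ) (hα : α ∈ Set.Ioc (n : ℝ) (n + 1))
    (f : ℤ → ℝ) (hf : ∀ k : ℤ, k ≤ 0 → f k = 0)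
    (g : ℤ → ℝ)
    (hg : ∀ j : ℤ, 1 ≤ j → g j = f j * (j : ℝ) ^ (α - (n + 1 : ℝ)))
    (hg0 : ∀ j : ℤ, j ≤ 0 → g j = 0)
    (k : ℤ) (hk : 1 ≤ k) :
    (k : ℝ) ^ ((n + 1 : ℝ) - α) * backDiff^[n + 1] (cumSum^[n + 1] g) k = f k := by
  rw [iter_inverse (n+1) g hg0, hg k hk]
  have hkpos : (0 : ℝ) < (k : ℝ) := by exact_mod_cast hk
  rw [mul_comm (f k), ← mul_assoc, ← Real.rpow_add hkpos]
  simp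
end

section
/- Let α ∈ ℝ and f : ℕ → ℝ. Then for every integer k ≥ 1, the fractional order difference of order α of the fractional order accumulation of order α of f recovers f(k); that is, ∑_{j=1}^{k} w₋(α, k−j)·(∑_{i=1}^{j} w₊(α, j−i)·f(i)) = f(k), where w₊(α, r) = (∏_{i=0}^{r−1}(α + i))/r! and w₋(α, r) = (∏_{i=0}^{r−1}(i − α))/r!. -/
open Finset

/-- The generalized binomial weight `w₊(α, r) = (∏_{i=0}^{r-1} (α + i)) / r!` of the fractional
order accumulation. -/
noncomputable def wPlus (α : ℝ) (r : ℕ) : ℝ :=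
  (∏ i ∈ Finset.range r, (α + i)) / (Nat.factorial r)

/-- The generalized binomial weight `w₋(α, r) = (∏_{i=0}^{r-1} (i - α)) / r!` of the fractional
order difference. -/
noncomputable def wMinus (α : ℝ) (r : ℕ) : ℝ :=
  (∏ i ∈ Finset.range r, ((i : ℝ) - α)) / (Nat.factorial r)

lemma wPlus_zero (α : ℝ) : wPlus α 0 = 1 := by simp [wPlus]

lemma wPlus_succ (α : ℝ) (r : ℕ) :
    ((r : ℝ) + 1) * wPlus α (r + 1) = (α + r) * wPlus α r := by
  have hf : (Nat.factorial r : ℝ) ≠ 0 := Nat.cast_ne_zero.mpr (Nat.factorial_ne_zero r)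
  have hr : ((r : ℝ) + 1) ≠ 0 := by positivity
  have h : (Nat.factorial (r + 1) : ℝ) = ((r : ℝ) + 1) * Nat.factorial r := by
    rw [Nat.factorial_succ]; push_cast; ring
  rw [wPlus, wPlus, Finset.prod_range_succ, h]
  field_simp

lemma wPlus_conv (x y : ℝ) : ∀ n : ℕ,
    ∑ r ∈ range (n + 1), wPlus x r * wPlus y (n - r) = wPlus (x + y) n := by
  intro n
  induction n with
  | zero => simp [wPlus_zero]
  | succ n ih =>
    have hne : ((n : ℝ) + 1) ≠ 0 := by positivity
    have key : ((n : ℝ) + 1) * ∑ r ∈ range (n + 2), wPlus x r * wPlus y (n + 1 - r)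
        = ((n : ℝ) + 1) * wPlus (x + y) (n + 1) := by
      have split : ((n : ℝ) + 1) * ∑ r ∈ range (n + 2), wPlus x r * wPlus y (n + 1 - r)
          = (∑ r ∈ range (n + 2), (r : ℝ) * (wPlus x r * wPlus y (n + 1 - r)))
            + ∑ r ∈ range (n + 2), ((n + 1 - r : ℕ) : ℝ) * (wPlus x r * wPlus y (n + 1 - r)) := by
        rw [Finset.mul_sum, ← Finset.sum_add_distrib]
        refine Finset.sum_congr rfl fun r hr => ?_
        have hr' : r ≤ n + 1 := by simpa [Nat.lt_succ_iff] using Finset.mem_range.mp hr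
        have : ((n + 1 - r : ℕ) : ℝ) = (n : ℝ) + 1 - r := by
          push_cast [Nat.cast_sub hr']; ring
        rw [this]; ring
      have s1 : ∑ r ∈ range (n + 2), (r : ℝ) * (wPlus x r * wPlus y (n + 1 - r))
          = ∑ r ∈ range (n + 1), (x + r) * (wPlus x r * wPlus y (n - r)) := by
        rw [Finset.sum_range_succ']
        simp only [Nat.cast_zero, zero_mul, add_zero]
        refine Finset.sum_congr rfl fun s hs => ?_
        have h1 : n + 1 - (s + 1) = n - s := by omega
        have := wPlus_succ x s
        rw [show n + 1 - (s + 1) = n - s from h1]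
        push_cast
        calc ((s : ℝ) + 1) * (wPlus x (s + 1) * wPlus y (n - s))
            = (((s : ℝ) + 1) * wPlus x (s + 1)) * wPlus y (n - s) := by ring
          _ = ((x + s) * wPlus x s) * wPlus y (n - s) := by rw [this]
          _ = (x + s) * (wPlus x s * wPlus y (n - s)) := by ring
      have s2 : ∑ r ∈ range (n + 2), ((n + 1 - r : ℕ) : ℝ) * (wPlus x r * wPlus y (n + 1 - r))
          = ∑ r ∈ range (n + 1), (y + ((n - r : ℕ) : ℝ)) * (wPlus x r * wPlus y (n - r)) := by
        rw [Finset.sum_range_succ]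
        simp only [Nat.sub_self, Nat.cast_zero, zero_mul, add_zero]
        refine Finset.sum_congr rfl fun r hr => ?_
        have hr' : r ≤ n := by simpa [Nat.lt_succ_iff] using Finset.mem_range.mp hr
        have h1 : n + 1 - r = (n - r) + 1 := by omega
        have := wPlus_succ y (n - r)
        rw [h1]
        calc (((n - r : ℕ) + 1 : ℕ) : ℝ) * (wPlus x r * wPlus y ((n - r) + 1))
            = ((((n - r : ℕ) : ℝ) + 1) * wPlus y ((n - r) + 1)) * wPlus x r := by
              push_cast; ring
          _ = ((y + ((n - r : ℕ) : ℝ)) * wPlus y (n - r)) * wPlus x r := by rw [this]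
          _ = (y + ((n - r : ℕ) : ℝ)) * (wPlus x r * wPlus y (n - r)) := by ring
      rw [split, s1, s2, ← Finset.sum_add_distrib]
      have comb : ∑ r ∈ range (n + 1),
          ((x + r) * (wPlus x r * wPlus y (n - r)) + (y + ((n - r : ℕ) : ℝ)) * (wPlus x r * wPlus y (n - r)))
          = ∑ r ∈ range (n + 1), (x + y + n) * (wPlus x r * wPlus y (n - r)) := by
        refine Finset.sum_congr rfl fun r hr => ?_
        have hr' : r ≤ n := by simpa [Nat.lt_succ_iff] using Finset.mem_range.mp hr
        have : ((n - r : ℕ) : ℝ) = (n : ℝ) - r := by push_cast [Nat.cast_sub hr']; ring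
        rw [this]; ring
      rw [comb, ← Finset.mul_sum, ih]
      have := wPlus_succ (x + y) n
      push_cast at this ⊢
      linarith [this]
    exact mul_left_cancel₀ hne key

lemma wMinus_eq (α : ℝ) (r : ℕ) : wMinus α r = wPlus (-α) r := by
  unfold wMinus wPlus
  congr 1
  exact Finset.prod_congr rfl fun i _ => by ring

lemma wPlus_zero_order (n : ℕ) : wPlus 0 n = if n = 0 then 1 else 0 := by
  cases n with
  | zero => simp [wPlus_zero]
  | succ m =>
    simp only [Nat.succ_ne_zero, if_false]
    unfold wPlus
    rw [Finset.prod_eq_zero (Finset.mem_range.mpr (Nat.succ_pos m))]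
    · simp
    · simp

lemma conv_delta (α : ℝ) (m : ℕ) :
    ∑ r ∈ range (m + 1), wMinus α (m - r) * wPlus α r = if m = 0 then 1 else 0 := by
  have := wPlus_conv α (-α) m
  rw [add_neg_cancel, wPlus_zero_order] at this
  rw [← this]
  exact Finset.sum_congr rfl fun r _ => by rw [wMinus_eq]; ring

/-- Wu's fractional order difference of order `α` inverts Wu's fractional order accumulation of
order `α`: for every `k ≥ 1`,
`∑_{j=1}^{k} w₋(α, k-j) * (∑_{i=1}^{j} w₊(α, j-i) * f i) = f k`. -/
theorem fod_foa_inverse (α : ℝ) (f : ℕ → ℝ) (k : ℕ) (hk : 1 ≤ k) :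
    ∑ j ∈ Finset.Icc 1 k, wMinus α (k - j) * (∑ i ∈ Finset.Icc 1 j, wPlus α (j - i) * f i)
      = f k := by
  have step1 : ∑ j ∈ Finset.Icc 1 k, wMinus α (k - j) *
        (∑ i ∈ Finset.Icc 1 j, wPlus α (j - i) * f i)
      = ∑ j ∈ Finset.Icc 1 k, ∑ i ∈ Finset.Icc 1 j,
          wMinus α (k - j) * (wPlus α (j - i) * f i) := by
    exact Finset.sum_congr rfl fun j _ => Finset.mul_sum _ _ _
  rw [step1]
  rw [Finset.sum_comm' (s := Finset.Icc 1 k) (t := fun j => Finset.Icc 1 j)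
    (t' := Finset.Icc 1 k) (s' := fun i => Finset.Icc i k)
    (fun j i => by simp only [Finset.mem_Icc]; omega)]
  have step2 : ∀ i ∈ Finset.Icc 1 k,
      ∑ j ∈ Finset.Icc i k, wMinus α (k - j) * (wPlus α (j - i) * f i)
        = (if k - i = 0 then 1 else 0) * f i := by
    intro i hi
    obtain ⟨hi1, hik⟩ := Finset.mem_Icc.mp hi
    rw [← Finset.Ico_add_one_right_eq_Icc, Finset.sum_Ico_eq_sum_range]
    have hm : k + 1 - i = (k - i) + 1 := by omega
    rw [hm]
    rw [show (if k - i = 0 then (1:ℝ) else 0) * f i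
        = (∑ r ∈ range ((k - i) + 1), wMinus α ((k - i) - r) * wPlus α r) * f i from by
      rw [conv_delta]]
    rw [Finset.sum_mul]
    refine Finset.sum_congr rfl fun r hr => ?_
    have hr' : r ≤ k - i := by simpa [Nat.lt_succ_iff] using Finset.mem_range.mp hr
    have h1 : k - (i + r) = (k - i) - r := by omega
    have h2 : (i + r) - i = r := by omega
    rw [h1, h2]; ring
  rw [Finset.sum_congr rfl step2]
  rw [Finset.sum_eq_single k]
  · simp
  · intro i hi hne
    obtain ⟨_, hik⟩ := Finset.mem_Icc.mp hi
    have : k - i ≠ 0 := by omega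
    simp [this]
  · intro h
    exact absurd (Finset.mem_Icc.mpr ⟨hk, le_refl k⟩) h
end
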